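/- Let L/K be a finite field extension and v a valuation on L. Then the index (vL : vK) of the value groups and the degree [Lv : Kv] of the residue field extension are both at most [L : K]. -/

import Mathlib

open IsLocalRing

variable {Γ₀ : Type*} [LinearOrderedCommGroupWithZero Γ₀]

/-- The value group `vL` of a valuation on a field `L`, as a subgroup of `Γ₀ˣ`. -/
def Valuation.valueGroup {L : Type*} [Field L] (v : Valuation L Γ₀) : Subgroup Γ₀ˣ where
  carrier := {γ : Γ₀ˣ | ∃ a : L, v a = (γ : Γ₀)}
  one_mem' := ⟨1, map_one v⟩
  mul_mem' := by
    rintro γ δ ⟨a, ha⟩ ⟨b, hb⟩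
    exact ⟨a * b, by rw [map_mul, ha, hb]; norm_cast⟩
  inv_mem' := by
    rintro γ ⟨a, ha⟩
    exact ⟨a⁻¹, by rw [map_inv₀, ha]; norm_cast⟩

/-- The inclusion of the valuation ring of `(K, v|K)` into the valuation ring of
`(L,v)`. -/
def valuationSubringInclusion {K L : Type*} [Field K] [Field L] [Algebra K L]
    (v : Valuation L Γ₀) :
    ↥(v.comap (algebraMap K L)).valuationSubring →+* ↥v.valuationSubring where
  toFun x := ⟨algebraMap K L x, x.2⟩
  map_one' := by ext; simp
  map_mul' x y := by ext; simp
  map_zero' := by ext; simp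
  map_add' x y := by ext; simp

theorem valuationSubringInclusion_isLocalHom {K L : Type*} [Field K] [Field L]
    [Algebra K L] (v : Valuation L Γ₀) :
    IsLocalHom (valuationSubringInclusion (K := K) v) := by
  constructor
  intro a ha
  apply ((Valuation.integer.integers (v.comap (algebraMap K L))).isUnit_iff_valuation_eq_one (x := a)).mpr
  exact ((Valuation.integer.integers v).isUnit_iff_valuation_eq_one).mp ha

/-- The induced embedding `Kv → Lv` of residue fields. -/
noncomputable def residueFieldMap {K L : Type*} [Field K] [Field L] [Algebra K L]
    (v : Valuation L Γ₀) :
    ResidueField ↥(v.comap (algebraMap K L)).valuationSubring →+*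
      ResidueField ↥v.valuationSubring :=
  letI := valuationSubringInclusion_isLocalHom (K := K) v
  ResidueField.map (valuationSubringInclusion (K := K) v)

/-- Elements with values in pairwise distinct cosets mod `vK` are linearly
independent over `K`. -/
theorem linearIndependent_of_distinct_cosets {K L : Type*} [Field K] [Field L]
    [Algebra K L] (v : Valuation L Γ₀) {ι : Type*} (a : ι → L)
    (h0 : ∀ i, v (a i) ≠ 0)
    (hd : ∀ i j, i ≠ j → ∀ c : K, v (a i) ≠ v (algebraMap K L c) * v (a j)) :
    LinearIndependent K a := by
  classical
  rw [linearIndependent_iff']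
  intro s g hsum
  by_contra hc
  push_neg at hc
  obtain ⟨i₀, hi₀s, hi₀⟩ := hc
  set t := s.filter (fun i => g i ≠ 0) with ht
  have htsub : t ⊆ s := Finset.filter_subset _ _
  have htsum : ∑ i ∈ t, g i • a i = 0 := by
    rw [← hsum]
    apply Finset.sum_subset htsub
    intro i his hit
    simp only [ht, Finset.mem_filter, not_and, not_not] at hit
    rw [hit his, zero_smul]
  have htne : t.Nonempty := ⟨i₀, Finset.mem_filter.2 ⟨hi₀s, hi₀⟩⟩
  obtain ⟨j, hjt, hjmax⟩ := Finset.exists_max_image t (fun i => v (g i • a i)) htne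
  have hgne : ∀ i ∈ t, g i ≠ 0 := fun i hi => (Finset.mem_filter.1 hi).2
  have hvne : ∀ i ∈ t, v (g i • a i) ≠ 0 := by
    intro i hi
    rw [Algebra.smul_def, map_mul]
    exact mul_ne_zero (fun h => hgne i hi (by
      have := (map_eq_zero (algebraMap K L)).mp ((Valuation.zero_iff v).mp h)
      exact this)) (h0 i)
  have hlt : ∀ i ∈ t \ {j}, v (g i • a i) < v (g j • a j) := by
    intro i hi
    rw [Finset.mem_sdiff, Finset.mem_singleton] at hi
    refine lt_of_le_of_ne (hjmax i hi.1) ?_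
    intro heq
    apply hd i j hi.2 (g j / g i)
    have hgj : (algebraMap K L) (g j) ≠ 0 :=
      fun h => hgne j hjt ((map_eq_zero _).mp h)
    have hgi : (algebraMap K L) (g i) ≠ 0 :=
      fun h => hgne i hi.1 ((map_eq_zero _).mp h)
    rw [Algebra.smul_def, Algebra.smul_def, map_mul, map_mul] at heq
    rw [map_div₀, map_div₀]
    have hvgj : v ((algebraMap K L) (g j)) ≠ 0 := fun h => hgj ((Valuation.zero_iff v).mp h)
    have hvgi : v ((algebraMap K L) (g i)) ≠ 0 := fun h => hgi ((Valuation.zero_iff v).mp h)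
    field_simp
    first
    | exact heq
    | exact heq.symm
    | (rw [mul_comm]; exact heq)
    | (rw [mul_comm]; exact heq.symm)
    | (rw [mul_comm, mul_comm (v (a j))]; exact heq)
    | (rw [mul_comm, mul_comm (v (a j))]; exact heq.symm)
    | (rw [mul_comm (v (a i)), mul_comm (v (a j))]; exact heq)
    | (rw [mul_comm (v (a i)), mul_comm (v (a j))]; exact heq.symm)
  have := Valuation.map_sum_eq_of_lt v hjt hlt
  rw [htsum, map_zero] at this
  exact hvne j hjt this.symm

/-- Elements of the valuation ring whose residues are linearly independent over the
residue field of `K` are linearly independent over `K`. -/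
theorem linearIndependent_of_residues {K L : Type*} [Field K] [Field L]
    [Algebra K L] (v : Valuation L Γ₀) {ι : Type*} (x : ι → ↥v.valuationSubring)
    (hli : letI := (residueFieldMap (K := K) v).toAlgebra
      LinearIndependent (ResidueField ↥(v.comap (algebraMap K L)).valuationSubring)
        (fun i => residue _ (x i))) :
    LinearIndependent K (fun i => (x i : L)) := by
  letI := (residueFieldMap (K := K) v).toAlgebra
  letI := valuationSubringInclusion_isLocalHom (K := K) v
  classical
  rw [linearIndependent_iff']
  intro s g hsum
  by_contra hc
  push_neg at hc
  obtain ⟨i₀, hi₀s, hi₀⟩ := hc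
  set t := s.filter (fun i => g i ≠ 0) with ht
  have htsub : t ⊆ s := Finset.filter_subset _ _
  have hgne : ∀ i ∈ t, g i ≠ 0 := fun i hi => (Finset.mem_filter.1 hi).2
  have htsum : ∑ i ∈ t, g i • (x i : L) = 0 := by
    rw [← hsum]
    apply Finset.sum_subset htsub
    intro i his hit
    simp only [ht, Finset.mem_filter, not_and, not_not] at hit
    rw [hit his, zero_smul]
  have htne : t.Nonempty := ⟨i₀, Finset.mem_filter.2 ⟨hi₀s, hi₀⟩⟩
  obtain ⟨j, hjt, hjmax⟩ := Finset.exists_max_image t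
    (fun i => v (algebraMap K L (g i))) htne
  have hgj : g j ≠ 0 := hgne j hjt
  -- divide by `g j`
  set d : ι → K := fun i => g i / g j with hd
  have hdmem : ∀ i ∈ t, (v.comap (algebraMap K L)) (d i) ≤ 1 := by
    intro i hi
    have : v (algebraMap K L (g j)) ≠ 0 := fun h =>
      hgj ((map_eq_zero _).mp ((Valuation.zero_iff v).mp h))
    simp only [Valuation.comap_apply, hd, map_div₀, Valuation.map_div]
    exact div_le_one_of_le₀ (hjmax i hi) zero_le'
  set D : (i : ι) → i ∈ t → ↥(v.comap (algebraMap K L)).valuationSubring :=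
    fun i hi => ⟨d i, hdmem i hi⟩ with hD
  have hsum2 : (∑ i ∈ t.attach, valuationSubringInclusion (K := K) v (D i.1 i.2) * x i.1
      : ↥v.valuationSubring) = 0 := by
    apply Subtype.ext
    show ((∑ i ∈ t.attach, valuationSubringInclusion (K := K) v (D i.1 i.2) * x i.1 :
        ↥v.valuationSubring) : L) = (0 : L)
    push_cast
    have hkey : ∀ i ∈ t.attach, ((valuationSubringInclusion (K := K) v (D i.1 i.2) :
        ↥v.valuationSubring) : L) * ((x i.1 : ↥v.valuationSubring) : L)
        = (algebraMap K L (g j))⁻¹ • (g i.1 • (x i.1 : L)) := by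
      intro i _
      have h1 : ((valuationSubringInclusion (K := K) v (D i.1 i.2) :
          ↥v.valuationSubring) : L) = algebraMap K L (d i.1) := rfl
      rw [h1, hd]
      have hgjL : algebraMap K L (g j) ≠ 0 := fun h => hgj ((map_eq_zero _).mp h)
      simp only [map_div₀, Algebra.smul_def, smul_eq_mul, Algebra.algebraMap_self_apply]
      field_simp
      try ring
    rw [Finset.sum_congr rfl hkey, ← Finset.smul_sum,
      Finset.sum_attach t (fun i => g i • (x i : L)), htsum, smul_zero]
  set c : ι → ResidueField ↥(v.comap (algebraMap K L)).valuationSubring :=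
    fun i => if h : i ∈ t then residue _ (D i h) else 0 with hc
  have hres : ∑ i ∈ t, c i • residue ↥v.valuationSubring (x i) = 0 := by
    have h1 := congrArg (residue ↥v.valuationSubring) hsum2
    rw [map_sum, map_zero] at h1
    rw [← Finset.sum_attach t (fun i => c i • residue ↥v.valuationSubring (x i)), ← h1]
    apply Finset.sum_congr rfl
    intro i _
    rw [map_mul, Algebra.smul_def, hc]
    simp only [dif_pos i.2]
    congr 1
    all_goals try rw [RingHom.algebraMap_toAlgebra]
    all_goals exact (ResidueField.map_residue _ _).symm
  have hli2 := linearIndependent_iff'.mp hli t c hres j hjt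
  rw [hc] at hli2
  simp only [dif_pos hjt] at hli2
  have hDj : (D j hjt) = 1 := Subtype.ext (div_self hgj)
  rw [hDj, map_one] at hli2
  exact one_ne_zero hli2

/-- Fundamental inequality consequences: if `L/K` is a finite field extension and `v`
a valuation on `L`, then the index `(vL : vK)` of the value groups and the degree
`[Lv : Kv]` of the residue field extension are both at most `[L : K]`. -/
theorem index_le_finrank_and_residue_rank_le_finrank {K L : Type*} [Field K] [Field L]
    [Algebra K L] [FiniteDimensional K L] (v : Valuation L Γ₀) :
    Cardinal.mk
        (↥v.valueGroup ⧸ ((v.comap (algebraMap K L)).valueGroup.subgroupOf v.valueGroup))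
        ≤ (Module.finrank K L : Cardinal) ∧
    @Module.rank (ResidueField ↥(v.comap (algebraMap K L)).valuationSubring)
        (ResidueField ↥v.valuationSubring) _ _
        (@Algebra.toModule _ _ _ _ (residueFieldMap v).toAlgebra)
        ≤ (Module.finrank K L : Cardinal) := by
  constructor
  · -- value group index
    set Q := ↥v.valueGroup ⧸ ((v.comap (algebraMap K L)).valueGroup.subgroupOf v.valueGroup)
      with hQ
    -- pick representatives
    have hrep : ∀ q : Q, ∃ a : L, v a = ((Quotient.out q : ↥v.valueGroup) : Γ₀ˣ) :=
      fun q => (Quotient.out q).2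
    choose a ha using hrep
    have h0 : ∀ q, v (a q) ≠ 0 := by
      intro q
      rw [ha q]
      exact Units.ne_zero _
    have hli : LinearIndependent K a := by
      apply linearIndependent_of_distinct_cosets v a h0
      intro q q' hne c hc
      apply hne
      rw [ha, ha] at hc
      have hc0 : v (algebraMap K L c) ≠ 0 := by
        intro h
        rw [h, zero_mul] at hc
        exact Units.ne_zero _ hc
      -- the unit γ_q * γ_{q'}⁻¹ lies in vK
      set γ : Γ₀ˣ := ((Quotient.out q : ↥v.valueGroup) : Γ₀ˣ) *
        (((Quotient.out q' : ↥v.valueGroup) : Γ₀ˣ))⁻¹ with hγ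
      have hγK : γ ∈ (v.comap (algebraMap K L)).valueGroup := by
        refine ⟨c, ?_⟩
        rw [Valuation.comap_apply]
        rw [hγ, Units.val_mul]
        rw [hc]
        field_simp
        exact (Units.mul_inv _).symm
      have hmem : (Quotient.out q' : ↥v.valueGroup)⁻¹ * (Quotient.out q) ∈
          ((v.comap (algebraMap K L)).valueGroup.subgroupOf v.valueGroup) := by
        rw [Subgroup.mem_subgroupOf]
        convert hγK using 1
        rw [hγ]
        push_cast
        exact mul_comm _ _
      have := (QuotientGroup.eq (s := ((v.comap (algebraMap K L)).valueGroup.subgroupOf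
        v.valueGroup))).mpr hmem
      rw [QuotientGroup.out_eq', QuotientGroup.out_eq'] at this
      exact this.symm
    exact hli.cardinalMk_le_finrank
  · -- residue field degree
    letI := (residueFieldMap (K := K) v).toAlgebra
    apply rank_le
    intro s hs
    -- lift the elements of s to the valuation subring
    choose lift hliftspec using (IsLocalRing.residue_surjective
      (R := ↥v.valuationSubring))
    have hli2 : LinearIndependent K (fun b : s => ((lift (b : _)) : L)) := by
      apply linearIndependent_of_residues v
      have heq : (fun i : s => residue ↥v.valuationSubring (lift (i : _))) =
          fun i : s => (i : ResidueField ↥v.valuationSubring) :=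
        funext fun i => hliftspec _
      rw [heq]
      exact hs
    simpa using hli2.fintype_card_le_finrank
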